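/- Let f : U → V and g : V → W be linear maps of vector spaces over a field such that f and g each have finite-dimensional kernel and cokernel. Then g ∘ f has finite-dimensional kernel and cokernel, and ind(g ∘ f) = ind(f) + ind(g), where ind T := dim ker T − dim coker T. -/
import Mathlib

set_option maxHeartbeats 1000000
set_option synthInstance.maxHeartbeats 400000

/-- If a submodule and the corresponding quotient are finite-dimensional, so is the module. -/
theorem fd_of_submodule_quotient {K V : Type} [Field K] [AddCommGroup V] [Module K V]
    (p : Submodule K V) (h1 : FiniteDimensional K p) (h2 : FiniteDimensional K (V ⧸ p)) :
    FiniteDimensional K V := by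
  have h : Module.rank K V < Cardinal.aleph0 := by
    rw [← Submodule.rank_quotient_add_rank p]
    exact Cardinal.add_lt_aleph0 (Module.rank_lt_aleph0_iff.2 h2) (Module.rank_lt_aleph0_iff.2 h1)
  exact Module.rank_lt_aleph0_iff.1 h

/-- **Composition of Fredholm-type maps: additivity of the index.**
If `f : U → V` and `g : V → W` have finite-dimensional kernel and cokernel, then so does
`g ∘ f`, and `ind (g ∘ f) = ind f + ind g`, where `ind T = dim ker T − dim coker T`. -/
theorem index_additive_under_composition
    {K : Type} [Field K]
    {U V W : Type}
    [AddCommGroup U] [Module K U] [AddCommGroup V] [Module K V]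
    [AddCommGroup W] [Module K W]
    (f : U →ₗ[K] V) (g : V →ₗ[K] W)
    (hkerf : FiniteDimensional K (LinearMap.ker f))
    (hcokerf : FiniteDimensional K (V ⧸ LinearMap.range f))
    (hkerg : FiniteDimensional K (LinearMap.ker g))
    (hcokerg : FiniteDimensional K (W ⧸ LinearMap.range g)) :
    FiniteDimensional K (LinearMap.ker (g.comp f)) ∧
    FiniteDimensional K (W ⧸ LinearMap.range (g.comp f)) ∧
    (Module.finrank K (LinearMap.ker (g.comp f)) : ℤ) -
        (Module.finrank K (W ⧸ LinearMap.range (g.comp f)) : ℤ) =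
      ((Module.finrank K (LinearMap.ker f) : ℤ) -
          (Module.finrank K (V ⧸ LinearMap.range f) : ℤ)) +
        ((Module.finrank K (LinearMap.ker g) : ℤ) -
          (Module.finrank K (W ⧸ LinearMap.range g) : ℤ)) := by
  set rf := LinearMap.range f with hrf
  set kg := LinearMap.ker g with hkg
  have hkle : LinearMap.ker f ≤ LinearMap.ker (g.comp f) := by
    intro x hx
    simp only [LinearMap.mem_ker] at hx ⊢
    simp [LinearMap.comp_apply, hx]
  -- kernel part
  set f' : ↥(LinearMap.ker (g.comp f)) →ₗ[K] V :=
    f.comp (LinearMap.ker (g.comp f)).subtype with hf'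
  have hkerf' : LinearMap.ker f' =
      Submodule.comap (LinearMap.ker (g.comp f)).subtype (LinearMap.ker f) :=
    LinearMap.ker_comp _ f
  have ekerf' : ↥(LinearMap.ker f') ≃ₗ[K] ↥(LinearMap.ker f) := by
    rw [hkerf']
    exact Submodule.comapSubtypeEquivOfLe hkle
  have hrangef' : LinearMap.range f' = rf ⊓ kg := by
    rw [hf', LinearMap.range_comp, Submodule.range_subtype, LinearMap.ker_comp,
      Submodule.map_comap_eq]
  haveI fdk : FiniteDimensional K (LinearMap.ker f') := ekerf'.symm.finiteDimensional
  haveI fdr : FiniteDimensional K (LinearMap.range f') := by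
    rw [hrangef']
    exact Submodule.finiteDimensional_of_le inf_le_right
  haveI fdq : FiniteDimensional K (↥(LinearMap.ker (g.comp f)) ⧸ LinearMap.ker f') :=
    f'.quotKerEquivRange.symm.finiteDimensional
  haveI fdkergf : FiniteDimensional K (LinearMap.ker (g.comp f)) :=
    fd_of_submodule_quotient (LinearMap.ker f') fdk fdq
  have e1 : Module.finrank K (LinearMap.range f') + Module.finrank K (LinearMap.ker f')
      = Module.finrank K (LinearMap.ker (g.comp f)) :=
    LinearMap.finrank_range_add_finrank_ker f'
  rw [ekerf'.finrank_eq, hrangef'] at e1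
  -- middle part: decompose coker f
  set ψ₁ : ↥kg →ₗ[K] (V ⧸ rf) := rf.mkQ.comp kg.subtype with hψ₁
  have hkerψ₁ : LinearMap.ker ψ₁ = Submodule.comap kg.subtype (rf ⊓ kg) := by
    rw [hψ₁, LinearMap.ker_comp, Submodule.ker_mkQ, Submodule.comap_inf,
      Submodule.comap_subtype_self, inf_top_eq]
  have ekerψ₁ : ↥(LinearMap.ker ψ₁) ≃ₗ[K] ↥(rf ⊓ kg) := by
    rw [hkerψ₁]
    exact Submodule.comapSubtypeEquivOfLe inf_le_right
  have hrangeψ₁ : LinearMap.range ψ₁ = Submodule.map rf.mkQ kg := by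
    rw [hψ₁, LinearMap.range_comp, Submodule.range_subtype]
  have e2 : Module.finrank K (Submodule.map rf.mkQ kg) + Module.finrank K ↥(rf ⊓ kg)
      = Module.finrank K kg := by
    have := LinearMap.finrank_range_add_finrank_ker ψ₁
    rwa [hrangeψ₁, ekerψ₁.finrank_eq] at this
  set N₁ : Submodule K (V ⧸ rf) := Submodule.map rf.mkQ kg with hN₁
  have eq2 : ((V ⧸ rf) ⧸ N₁) ≃ₗ[K] (V ⧸ (rf ⊔ kg)) :=
    Submodule.quotientQuotientEquivQuotientSup rf kg
  haveI fdb : FiniteDimensional K (V ⧸ (rf ⊔ kg)) := eq2.finiteDimensional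
  have e3 : Module.finrank K (V ⧸ (rf ⊔ kg)) + Module.finrank K N₁
      = Module.finrank K (V ⧸ rf) := by
    have := Submodule.finrank_quotient_add_finrank N₁
    rwa [eq2.finrank_eq] at this
  -- cokernel part
  set rgf := LinearMap.range (g.comp f) with hrgf
  set ψ₂ : V →ₗ[K] (W ⧸ rgf) := rgf.mkQ.comp g with hψ₂
  have hkerψ₂ : LinearMap.ker ψ₂ = rf ⊔ kg := by
    rw [hψ₂, LinearMap.ker_comp, Submodule.ker_mkQ, hrgf, LinearMap.range_comp,
      Submodule.comap_map_eq, hrf, hkg]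
  have hrangeψ₂ : LinearMap.range ψ₂ = Submodule.map rgf.mkQ (LinearMap.range g) := by
    rw [hψ₂, LinearMap.range_comp]
  set N₂ : Submodule K (W ⧸ rgf) := Submodule.map rgf.mkQ (LinearMap.range g) with hN₂
  have eqN₂ : (V ⧸ (rf ⊔ kg)) ≃ₗ[K] ↥N₂ := by
    rw [← hrangeψ₂, ← hkerψ₂]
    exact ψ₂.quotKerEquivRange
  haveI fdN₂ : FiniteDimensional K ↥N₂ := eqN₂.finiteDimensional
  have hsup : rgf ⊔ LinearMap.range g = LinearMap.range g :=
    sup_eq_right.2 (LinearMap.range_comp_le_range f g)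
  have eq4 : ((W ⧸ rgf) ⧸ N₂) ≃ₗ[K] (W ⧸ LinearMap.range g) := by
    have h := Submodule.quotientQuotientEquivQuotientSup rgf (LinearMap.range g)
    rwa [hsup] at h
  haveI fdQN₂ : FiniteDimensional K ((W ⧸ rgf) ⧸ N₂) := eq4.symm.finiteDimensional
  haveI fdcokergf : FiniteDimensional K (W ⧸ rgf) := fd_of_submodule_quotient N₂ fdN₂ fdQN₂
  have e4 : Module.finrank K (W ⧸ LinearMap.range g) + Module.finrank K N₂
      = Module.finrank K (W ⧸ rgf) := by
    have := Submodule.finrank_quotient_add_finrank N₂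
    rwa [eq4.finrank_eq] at this
  have e5 : Module.finrank K N₂ = Module.finrank K (V ⧸ (rf ⊔ kg)) :=
    (eqN₂.symm.finrank_eq)
  refine ⟨fdkergf, fdcokergf, ?_⟩
  rw [e5] at e4
  omega
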